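/- (Generalized Drawdown Modulation Lemma, sufficiency.) Consider a portfolio of n stocks with account value V(k+1) = V(k) + ⟨I(k), X(k)⟩, V(0) > 0, where for every k and every i the realized return satisfies X_min,i ≤ X_i(k) ≤ X_max,i. If for every stage k < N the investment vector satisfies ⟨|X_min|, I⁺(k)⟩ − ⟨X_max, I⁻(k)⟩ ≤ M(k)·V(k), where M(k) = (d_max − d(k))/(1 − d(k)), then d(k) ≤ d_max and V(k) > 0 for every stage k = 0, 1, …, N. -/

import Mathlib

/-- Running maximum `V_max(k) = max_{0 ≤ i ≤ k} V(i)` of the account value. -/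
noncomputable def runMax (V : ℕ → ℝ) (k : ℕ) : ℝ :=
  (Finset.range (k + 1)).sup' Finset.nonempty_range_add_one V

/-- Percentage drawdown `d(k) = (V_max(k) - V(k)) / V_max(k)`. -/
noncomputable def drawdown (V : ℕ → ℝ) (k : ℕ) : ℝ :=
  (runMax V k - V k) / runMax V k

lemma runMax_succ (V : ℕ → ℝ) (k : ℕ) :
    runMax V (k + 1) = max (V (k + 1)) (runMax V k) := by
  apply le_antisymm
  · apply Finset.sup'_le
    intro j hj
    rcases Nat.lt_succ_iff_lt_or_eq.mp (Finset.mem_range.mp hj) with h | h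
    · exact le_trans (Finset.le_sup' V (Finset.mem_range.mpr h)) (le_max_right _ _)
    · subst h; exact le_max_left _ _
  · exact max_le (Finset.le_sup' V (Finset.mem_range.mpr (Nat.lt_succ_self _)))
      (Finset.sup'_le _ _ fun j hj => Finset.le_sup' V
        (Finset.mem_range.mpr (Nat.lt_succ_of_lt (Finset.mem_range.mp hj))))

lemma le_runMax (V : ℕ → ℝ) {j k : ℕ} (h : j ≤ k) : V j ≤ runMax V k :=
  Finset.le_sup' V (Finset.mem_range.mpr (Nat.lt_succ_of_le h))

theorem generalized_drawdown_modulation_sufficiency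
    (n N : ℕ) (Xmin Xmax : Fin n → ℝ) (dmax : ℝ)
    (hb : ∀ i, -1 < Xmin i ∧ Xmin i < 0 ∧ 0 < Xmax i)
    (hdmax0 : 0 < dmax) (hdmax1 : dmax < 1)
    (V : ℕ → ℝ) (I X : ℕ → Fin n → ℝ)
    (hV0 : 0 < V 0)
    (hrec : ∀ k, V (k + 1) = V k + ∑ i, I k i * X k i)
    (hX : ∀ k i, Xmin i ≤ X k i ∧ X k i ≤ Xmax i)
    (hI : ∀ k < N,
      (∑ i, |Xmin i| * max (I k i) 0) - (∑ i, Xmax i * min (I k i) 0)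
        ≤ ((dmax - drawdown V k) / (1 - drawdown V k)) * V k) :
    ∀ k ≤ N, drawdown V k ≤ dmax ∧ 0 < V k := by
  intro k hk
  induction k with
  | zero =>
    refine ⟨?_, hV0⟩
    have h0 : runMax V 0 = V 0 := by
      unfold runMax
      simp
    unfold drawdown
    rw [h0]
    simp
    positivity
  | succ k ih =>
    obtain ⟨hd, hVk⟩ := ih (Nat.le_of_succ_le hk)
    set M := runMax V k with hMdef
    have hM0 : 0 < M := lt_of_lt_of_le hV0 (le_runMax V (Nat.zero_le k))
    have hVle : V k ≤ M := le_runMax V le_rfl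
    set d := drawdown V k with hddef
    have hVeq : V k = (1 - d) * M := by
      rw [hddef]
      unfold drawdown
      rw [← hMdef, one_sub_div hM0.ne', div_mul_cancel₀ _ hM0.ne']; ring
    have h1d : 0 < 1 - d := by
      nlinarith [hVeq]
    -- pointwise bound on sums
    have hsum : ∑ i, (Xmax i * min (I k i) 0 - |Xmin i| * max (I k i) 0)
        ≤ ∑ i, I k i * X k i := by
      apply Finset.sum_le_sum
      intro i _
      have hb' := hb i
      have hXi := hX k i
      have habs : |Xmin i| = -(Xmin i) := abs_of_neg hb'.2.1
      have hmax0 : (0:ℝ) ≤ max (I k i) 0 := le_max_right _ _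
      have hmin0 : min (I k i) 0 ≤ 0 := min_le_right _ _
      have h1 : Xmin i * max (I k i) 0 ≤ X k i * max (I k i) 0 :=
        mul_le_mul_of_nonneg_right hXi.1 hmax0
      have h2 : Xmax i * min (I k i) 0 ≤ X k i * min (I k i) 0 :=
        mul_le_mul_of_nonpos_right hXi.2 hmin0
      have hsplit : max (I k i) 0 + min (I k i) 0 = I k i := by
        rcases le_total (I k i) 0 with h | h
        · simp [max_eq_right h, min_eq_left h]
        · simp [max_eq_left h, min_eq_right h]
      nlinarith [h1, h2]
    have hIk := hI k hk
    have hVsucc : (1 - dmax) * M ≤ V (k + 1) := by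
      have := hrec k
      rw [this]
      have hMV : ((dmax - d) / (1 - d)) * V k = (dmax - d) * M := by
        rw [hVeq]
        field_simp
      have hS : -((dmax - d) * M) ≤ ∑ i, I k i * X k i := by
        have : (∑ i, |Xmin i| * max (I k i) 0) - (∑ i, Xmax i * min (I k i) 0)
            ≤ (dmax - d) * M := by rw [← hMV]; exact hIk
        have h2 : ∑ i, (Xmax i * min (I k i) 0 - |Xmin i| * max (I k i) 0)
            = -((∑ i, |Xmin i| * max (I k i) 0) - (∑ i, Xmax i * min (I k i) 0)) := by
          rw [neg_sub, ← Finset.sum_sub_distrib]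
        linarith [hsum, h2 ▸ hsum]
      nlinarith [hS, hVeq]
    have hV1 : 0 < V (k + 1) := lt_of_lt_of_le (by nlinarith) hVsucc
    refine ⟨?_, hV1⟩
    have hM' : runMax V (k + 1) = max (V (k + 1)) M := runMax_succ V k
    have hM'0 : 0 < runMax V (k + 1) := by
      rw [hM']; exact lt_max_of_lt_right hM0
    have hkey : (1 - dmax) * runMax V (k + 1) ≤ V (k + 1) := by
      rw [hM']
      rcases max_cases (V (k + 1)) M with ⟨heq, _⟩ | ⟨heq, _⟩
      · rw [heq]; nlinarith
      · rw [heq]; exact hVsucc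
    unfold drawdown
    rw [div_le_iff₀ hM'0]
    nlinarith [hkey, hM'0]
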